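/- Under the assumptions of the basic estimate (γ ≤ 1/16, √α > 4/γ, F and g as specified, fibre maps T_{β,θ}(x) = F(x) − βg(θ), orbit ξ_j(β,l) starting at ξ_{−l}(β,l) = 3; additionally F(x_α) = x_α for x_α = 1 + 2/√α, F' ≤ (1/2)α^{−1/2} on {|x| ≥ γ}, and g(0) = 1): let n ≥ 1, l ≥ 0, and suppose d(jω mod 1, 0) ≥ 3γ/L₂ for all j ∈ [−l,−1] ∪ [1,n−1]. Then ξ_n(β,l) ∈ [−1/α, 1/α] implies: (a) β ∈ [1 + 1/√α, 1 + 3/√α]; (b) ξ_j(β,l) ∈ [−1/α,1/α] for all j ∈ [1,n]; (c) ξ_j(β,l) ≥ γ for all j ∈ [−l,0]. -/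

import Mathlib

open Set

/-- The circle 𝕋¹ = ℝ/ℤ. -/
abbrev Torus := AddCircle (1 : ℝ)

set_option maxHeartbeats 2000000 in
/-- **Induction start.** In the setting of the basic estimate, with additionally
`F(x_α) = x_α` for `x_α = 1 + 2/√α`, `F' ≤ (1/2)α^{-1/2}` on `{|x| ≥ γ}` and
`g(0) = 1`: if `n ≥ 1`, `l ≥ 0` and `d(jω,0) ≥ 3γ/L₂` for all
`j ∈ [-l,-1] ∪ [1,n-1]`, then `ξ_n(β,l) ∈ [-1/α,1/α]` implies
`β ∈ [1+1/√α, 1+3/√α]`, `ξ_j(β,l) ∈ [-1/α,1/α]` for all `j ∈ [1,n]`, and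
`ξ_j(β,l) ≥ γ` for all `j ∈ [-l,0]`. -/
theorem induction_start
    (α γ L₂ ω β : ℝ)
    (hγpos : 0 < γ) (hγ : γ ≤ 1 / 16)
    (hα : 4 / γ < Real.sqrt α)
    (hL₂ : 0 < L₂)
    (F F' : ℝ → ℝ)
    (hmaps : MapsTo F (Icc (-3 : ℝ) 3) (Icc (-(3 / 2) : ℝ) (3 / 2)))
    (hderiv : ∀ x ∈ Icc (-3 : ℝ) 3, HasDerivAt F (F' x) x)
    (hF'pos : ∀ x ∈ Icc (-3 : ℝ) 3, 0 < F' x)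
    (hFfix0 : F 0 = 0)
    (hFfixp : F (1 + 2 / Real.sqrt α) = 1 + 2 / Real.sqrt α)
    (hFfixm : F (-(1 + 2 / Real.sqrt α)) = -(1 + 2 / Real.sqrt α))
    (hFup : 1 - γ ≤ F (1 / α)) (hFdown : F (-(1 / α)) ≤ -(1 - γ))
    (hFcontr : ∀ x ∈ Icc (-3 : ℝ) 3, γ ≤ |x| → F' x ≤ (1 / 2) * (Real.sqrt α)⁻¹)
    (g : Torus → ℝ) (hgcont : Continuous g) (hg01 : ∀ θ, g θ ∈ Icc (0 : ℝ) 1)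
    (hg0 : g 0 = 1)
    (hgpeak : ∀ θ : Torus, g θ ≤ max (1 - 3 * γ) (1 - L₂ * ‖θ‖))
    (hβmem : β ∈ Icc (0 : ℝ) (3 / 2))
    (n l : ℤ) (hn : 1 ≤ n) (hl : 0 ≤ l)
    (ξ : ℤ → ℝ)
    (hstart : ξ (-l) = 3)
    (hrec : ∀ i : ℤ, -l ≤ i → ξ (i + 1) = F (ξ i) - β * g ((((i : ℝ) * ω : ℝ) : Torus)))
    (hfar : ∀ j : ℤ, ((-l ≤ j ∧ j ≤ -1) ∨ (1 ≤ j ∧ j ≤ n - 1)) →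
      3 * γ / L₂ ≤ ‖(((j : ℝ) * ω : ℝ) : Torus)‖)
    (hend : ξ n ∈ Icc (-(1 / α)) (1 / α)) :
    β ∈ Icc (1 + 1 / Real.sqrt α) (1 + 3 / Real.sqrt α) ∧
    (∀ j : ℤ, 1 ≤ j → j ≤ n → ξ j ∈ Icc (-(1 / α)) (1 / α)) ∧
    (∀ j : ℤ, -l ≤ j → j ≤ 0 → γ ≤ ξ j) := by

  obtain ⟨hβ0, hβ32⟩ := hβmem
  set s := Real.sqrt α with hs_def
  have hs0 : 0 < s := lt_trans (by positivity) hα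
  have hαpos : 0 < α := by
    rcases lt_or_ge 0 α with h | h
    · exact h
    · exfalso
      have h0 : s = 0 := by rw [hs_def]; exact Real.sqrt_eq_zero'.mpr h
      rw [h0] at hs0; exact lt_irrefl 0 hs0
  set u := s⁻¹ with hu_def
  have hu0 : 0 < u := inv_pos.mpr hs0
  have hsu : s * u = 1 := mul_inv_cancel₀ (ne_of_gt hs0)
  have h4 : 4 < s * γ := (div_lt_iff₀ hγpos).mp hα
  have hu4 : 4 * u < γ := by
    have h5 := mul_lt_mul_of_pos_right h4 hu0
    have h6 : s * γ * u = γ := by rw [mul_comm s γ, mul_assoc, hsu, mul_one]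
    linarith
  have hu64 : u < 1 / 64 := by linarith
  have hss : s * s = α := by rw [hs_def]; exact Real.mul_self_sqrt hαpos.le
  have hinvα : 1 / α = u * u := by rw [← hss, hu_def, one_div, mul_inv]
  have e1 : 1 / s = u := by rw [one_div]
  have e2 : 2 / s = 2 * u := by rw [div_eq_mul_inv]
  have e3 : 3 / s = 3 * u := by rw [div_eq_mul_inv]
  have hu2pos : 0 < u * u := mul_pos hu0 hu0
  have hu2γ : u * u < γ := by
    nlinarith [mul_lt_mul_of_pos_right hu4 hu0, mul_lt_mul_of_pos_left hu64 hγpos]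
  rw [e2] at hFfixp hFfixm
  rw [hinvα] at hFup hFdown hend
  rw [e1, e3, hinvα]
  -- memberships of special points
  have h1α3 : (u * u) ∈ Icc (-3 : ℝ) 3 := ⟨by linarith, by linarith⟩
  have hm1α3 : (-(u * u)) ∈ Icc (-3 : ℝ) 3 := ⟨by linarith, by linarith⟩
  have hxα3 : (1 + 2 * u) ∈ Icc (-3 : ℝ) 3 := ⟨by linarith, by linarith⟩
  -- monotonicity of F
  have hmono : StrictMonoOn F (Icc (-3 : ℝ) 3) := by
    apply strictMonoOn_of_deriv_pos (convex_Icc _ _)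
    · exact fun x hx => (hderiv x hx).continuousAt.continuousWithinAt
    · intro x hx
      have hx' : x ∈ Icc (-3 : ℝ) 3 := interior_subset hx
      rw [(hderiv x hx').deriv]
      exact hF'pos x hx'
  have hmle : ∀ a b : ℝ, a ∈ Icc (-3 : ℝ) 3 → b ∈ Icc (-3 : ℝ) 3 → a ≤ b → F a ≤ F b :=
    fun a b ha hb h => hmono.monotoneOn ha hb h
  -- contraction estimate on [γ, 3]
  have hcontr : ∀ a b : ℝ, γ ≤ a → a ≤ b → b ≤ 3 → |F b - F a| ≤ u / 2 * (b - a) := by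
    intro a b ha hab hb3
    have hsub : Icc a b ⊆ Icc (-3 : ℝ) 3 := Icc_subset_Icc (by linarith) hb3
    have bound : ∀ x ∈ Ico a b, ‖F' x‖ ≤ u / 2 := by
      intro x hx
      have hx' : x ∈ Icc a b := Ico_subset_Icc_self hx
      have hx3 : x ∈ Icc (-3 : ℝ) 3 := hsub hx'
      have hγx : γ ≤ |x| := le_trans (le_trans ha hx'.1) (le_abs_self x)
      have hb := hFcontr x hx3 hγx
      rw [Real.norm_eq_abs, abs_of_pos (hF'pos x hx3)]
      linarith
    have key := norm_image_sub_le_of_norm_deriv_le_segment'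
      (fun x hx => (hderiv x (hsub hx)).hasDerivWithinAt) bound b (right_mem_Icc.mpr hab)
    rw [Real.norm_eq_abs] at key
    exact key
  -- β g θ bounds
  have hbg0 : ∀ θ : Torus, 0 ≤ β * g θ := fun θ => mul_nonneg hβ0 (hg01 θ).1
  have hbgle : ∀ B : ℝ, β ≤ B → 0 ≤ B → ∀ θ : Torus, g θ ≤ 1 - 3 * γ →
      β * g θ ≤ B * (1 - 3 * γ) := fun B hB hB0 θ hgθ => mul_le_mul hB hgθ (hg01 θ).1 hB0
  -- far from peak: g ≤ 1 - 3γ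
  have hgfar : ∀ j : ℤ, ((-l ≤ j ∧ j ≤ -1) ∨ (1 ≤ j ∧ j ≤ n - 1)) →
      g ((((j : ℝ) * ω : ℝ) : Torus)) ≤ 1 - 3 * γ := by
    intro j hj
    refine (hgpeak _).trans (max_le le_rfl ?_)
    have h2 := hfar j hj
    rw [div_le_iff₀ hL₂] at h2
    nlinarith [h2]
  -- the orbit stays in [-3, 3]
  have hmem : ∀ j : ℤ, -l ≤ j → ξ j ∈ Icc (-3 : ℝ) 3 := by
    intro j hj
    refine Int.le_induction (motive := fun j _ => ξ j ∈ Icc (-3 : ℝ) 3) ?_ ?_ j hj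
    · show ξ (-l) ∈ Icc (-3 : ℝ) 3
      rw [hstart]; exact ⟨by norm_num, le_refl 3⟩
    · intro i hi ih
      show ξ (i + 1) ∈ Icc (-3 : ℝ) 3
      rw [hrec i hi]
      obtain ⟨h1, h2⟩ := hmaps ih
      have h3 := hbg0 ((((i : ℝ) * ω : ℝ) : Torus))
      have hgle := (hg01 ((((i : ℝ) * ω : ℝ) : Torus))).2
      have h5 : β * g ((((i : ℝ) * ω : ℝ) : Torus) : Torus) ≤ 3 / 2 := by
        nlinarith [(hg01 ((((i : ℝ) * ω : ℝ) : Torus))).1]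
      exact ⟨by linarith, by linarith⟩
  -- forward invariance of [-3, -1/α)
  have hinvar : ∀ j : ℤ, -l ≤ j → ξ j < -(u * u) → ∀ k : ℤ, j ≤ k → ξ k < -(u * u) := by
    intro j hj hξj k hk
    refine Int.le_induction (motive := fun k _ => ξ k < -(u * u)) hξj ?_ k hk
    intro i hi ih
    have hi' : -l ≤ i := le_trans hj hi
    show ξ (i + 1) < -(u * u)
    rw [hrec i hi']
    have hFle : F (ξ i) ≤ F (-(u * u)) := hmle _ _ (hmem i hi') hm1α3 (le_of_lt ih)
    have h3 := hbg0 ((((i : ℝ) * ω : ℝ) : Torus))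
    linarith [hFdown]
  have hln : -l ≤ n := by omega
  have hl0 : -l ≤ (0 : ℤ) := by omega
  have hlow : ∀ j : ℤ, -l ≤ j → j ≤ n → -(u * u) ≤ ξ j := by
    intro j hj hjn
    by_contra hcon
    push_neg at hcon
    exact absurd hend.1 (not_le.mpr (hinvar j hj hcon n hjn))
  -- F x ≥ 1 - γ whenever x ≥ 1/α
  have hF1γ : ∀ x : ℝ, x ∈ Icc (-3 : ℝ) 3 → u * u ≤ x → 1 - γ ≤ F x :=
    fun x hx hux => le_trans hFup (hmle _ _ h1α3 hx hux)
  -- ξ 1 = F (ξ 0) - β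
  have hξ1 : ξ 1 = F (ξ 0) - β := by
    have h := hrec 0 hl0
    have e : ((((0 : ℤ) : ℝ) * ω : ℝ) : Torus) = (0 : Torus) := by
      push_cast
      rw [zero_mul]
      exact QuotientAddGroup.mk_zero _
    rw [e, hg0, mul_one] at h
    simpa using h
  -- upper bound on β
  have hβup : β ≤ 1 + 3 * u := by
    have h0 := hmem 0 hl0
    have h1 := hlow 1 (by omega) hn
    have hβeq : β = F (ξ 0) - ξ 1 := by linarith [hξ1]
    rcases le_or_gt (ξ 0) (1 + 2 * u) with hc | hc
    · have hF0 : F (ξ 0) ≤ 1 + 2 * u := by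
        calc F (ξ 0) ≤ F (1 + 2 * u) := hmle _ _ h0 hxα3 hc
        _ = 1 + 2 * u := hFfixp
      nlinarith
    · have hd := hcontr (1 + 2 * u) (ξ 0) (by linarith) hc.le h0.2
      have hd2 := (abs_le.mp hd).2
      rw [hFfixp] at hd2
      nlinarith [mul_nonneg hu0.le (by linarith [h0.2] : (0 : ℝ) ≤ 3 - ξ 0)]
  -- lower bound on β
  have hβlo : 1 + u ≤ β := by
    by_contra hb
    push_neg at hb
    have K : ∀ j : ℤ, -l ≤ j →
        (j ≤ n → ((j ≤ 0 → γ ≤ ξ j) ∧ (1 ≤ j → u * u < ξ j))) := by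
      intro j hj
      refine Int.le_induction
        (motive := fun j _ => j ≤ n → ((j ≤ 0 → γ ≤ ξ j) ∧ (1 ≤ j → u * u < ξ j))) ?_ ?_ j hj
      · intro _
        constructor
        · intro _; rw [hstart]; linarith
        · intro h1; exfalso; omega
      · intro i hi ih hin1
        obtain ⟨ih1, ih2⟩ := ih (by omega)
        have h1u : (0 : ℝ) ≤ 1 + u := by linarith
        rcases lt_trichotomy i 0 with hi0 | hi0 | hi0
        · -- i ≤ -1
          have hfar' := hgfar i (Or.inl ⟨hi, by omega⟩)
          have hξi : γ ≤ ξ i := ih1 (by omega)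
          have hFi : 1 - γ ≤ F (ξ i) := hF1γ _ (hmem i hi) (by linarith)
          have hbg := hbgle (1 + u) hb.le h1u _ hfar'
          constructor
          · intro _
            rw [hrec i hi]
            nlinarith [mul_pos hγpos hu0]
          · intro h1; exfalso; omega
        · subst hi0
          have hξ0 : γ ≤ ξ 0 := ih1 le_rfl
          have h0m := hmem 0 hl0
          constructor
          · intro h1; exfalso; omega
          · intro _
            have e01 : (0 : ℤ) + 1 = 1 := rfl
            rw [e01, hξ1]
            rcases le_or_gt (1 + 2 * u) (ξ 0) with hc | hc
            · have hF0 : 1 + 2 * u ≤ F (ξ 0) := by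
                calc (1 : ℝ) + 2 * u = F (1 + 2 * u) := hFfixp.symm
                _ ≤ F (ξ 0) := hmle _ _ hxα3 h0m hc
              nlinarith
            · have hd := hcontr (ξ 0) (1 + 2 * u) hξ0 hc.le hxα3.2
              have hd2 := (abs_le.mp hd).2
              rw [hFfixp] at hd2
              nlinarith [mul_pos hu0 hγpos]
        · -- 1 ≤ i
          have hfar' := hgfar i (Or.inr ⟨by omega, by omega⟩)
          have hξi : u * u < ξ i := ih2 (by omega)
          have hFi : 1 - γ ≤ F (ξ i) := hF1γ _ (hmem i hi) hξi.le
          have hbg := hbgle (1 + u) hb.le h1u _ hfar'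
          constructor
          · intro h1; exfalso; omega
          · intro _
            rw [hrec i hi]
            nlinarith [mul_pos hγpos hu0]
    have hKn := (K n hln le_rfl).2 hn
    exact absurd hend.2 (not_le.mpr hKn)
  -- part (c): ξ_j ≥ γ for j ∈ [-l, 0]
  have hpartc : ∀ j : ℤ, -l ≤ j → j ≤ 0 → γ ≤ ξ j := by
    intro j hj
    refine Int.le_induction (motive := fun j _ => j ≤ 0 → γ ≤ ξ j) ?_ ?_ j hj
    · intro _; rw [hstart]; linarith
    · intro i hi ih hi10
      have hξi : γ ≤ ξ i := ih (by omega)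
      have hfar' := hgfar i (Or.inl ⟨hi, by omega⟩)
      have hFi : 1 - γ ≤ F (ξ i) := hF1γ _ (hmem i hi) (by linarith)
      have hbg := hbgle (1 + 3 * u) hβup (by linarith) _ hfar'
      rw [hrec i hi]
      nlinarith [mul_pos hγpos hu0]
  -- part (b) upper bound: backwards induction
  have hup : ∀ j : ℤ, j ≤ n → (1 ≤ j → ξ j ≤ u * u) := by
    intro j hj
    refine Int.le_induction_down (motive := fun j _ => 1 ≤ j → ξ j ≤ u * u) ?_ ?_ j hj
    · intro _; exact hend.2
    · intro i hi ih h1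
      have h2 : (1 : ℤ) ≤ i := by omega
      have hii := ih h2
      by_contra hcon
      push_neg at hcon
      have hmem' := hmem (i - 1) (by omega)
      have hFi : 1 - γ ≤ F (ξ (i - 1)) := hF1γ _ hmem' hcon.le
      have hfar' := hgfar (i - 1) (Or.inr ⟨by omega, by omega⟩)
      have hbg := hbgle (1 + 3 * u) hβup (by linarith) _ hfar'
      have hrw := hrec (i - 1) (by omega)
      rw [sub_add_cancel] at hrw
      rw [hrw] at hii
      nlinarith [mul_pos hγpos hu0]
  refine ⟨⟨hβlo, hβup⟩, ?_, hpartc⟩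
  intro j h1j hjn
  exact ⟨hlow j (by omega) hjn, hup j hjn h1j⟩
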